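/- For every positive integer n, B_{2n} evaluated via the formula B_{2n} = (n / (1 - 2^(2n))) * sum over k from 1 to n of (1/(2^k * k)) * sum over r from 0 to k of ((-1)^r / 2^r) * binomial(k,r) * sum over j from 0 to k-r of ((-1)^j / 2^j) * binomial(k-r,j) * (r-j)^(2n) agrees with the (2n)-th Bernoulli number. -/

import Mathlib

open PowerSeries Finset
namespace BernExpl
noncomputable def E : ℚ⟦X⟧ := exp ℚ
noncomputable def E' : ℚ⟦X⟧ := rescale (-1 : ℚ) (exp ℚ)
noncomputable def ch : ℚ⟦X⟧ := (C (R := ℚ)) (1/2) * (E + E')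
noncomputable def sh : ℚ⟦X⟧ := (C (R := ℚ)) (1/2) * (E - E')
lemma coeff_E (m : ℕ) : coeff (R := ℚ) m E = 1 / m.factorial := by
  simp [E, coeff_exp]
lemma coeff_E' (m : ℕ) : coeff (R := ℚ) m E' = (-1) ^ m / m.factorial := by
  simp [E', coeff_rescale, coeff_exp]; ring

lemma dE : d⁄dX ℚ E = E := by
  ext m
  rw [coeff_derivative, coeff_E, coeff_E, Nat.factorial_succ]
  have h1 : ((m:ℚ)+1) ≠ 0 := by positivity
  have h2 : (m.factorial : ℚ) ≠ 0 := by exact_mod_cast m.factorial_ne_zero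
  field_simp
  push_cast
  ring

lemma dE' : d⁄dX ℚ E' = -E' := by
  ext m
  rw [coeff_derivative, coeff_E', map_neg, coeff_E', Nat.factorial_succ]
  have h1 : ((m:ℚ)+1) ≠ 0 := by positivity
  have h2 : (m.factorial : ℚ) ≠ 0 := by exact_mod_cast m.factorial_ne_zero
  field_simp
  push_cast
  ring

lemma dC (q : ℚ) (f : ℚ⟦X⟧) : d⁄dX ℚ ((C (R := ℚ)) q * f) = (C (R := ℚ)) q * d⁄dX ℚ f := by
  rw [Derivation.leibniz, derivative_C, smul_eq_mul, smul_eq_mul, mul_zero, add_zero]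

lemma dch : d⁄dX ℚ (1 - ch) = -sh := by
  rw [map_sub, ch, dC, map_add, dE, dE', sh]
  have : d⁄dX ℚ (1 : ℚ⟦X⟧) = 0 := by
    simpa using derivative_C (R := ℚ) (r := 1)
  rw [this]
  ring

noncomputable def P (K : ℕ) : ℚ⟦X⟧ :=
  ∑ k ∈ range (K+1), (C (R := ℚ)) ((1/2)^k * (1/(k:ℚ))) * (1 - ch)^k

noncomputable def u (k : ℕ) : ℚ⟦X⟧ := (C (R := ℚ)) ((1/2)^k) * (1 - ch)^k

lemma key (K : ℕ) : (1 + ch) * d⁄dX ℚ (P K) = -sh * (1 - u K) := by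
  have hterm : ∀ k : ℕ, (1 + ch) * d⁄dX ℚ ((C (R := ℚ)) ((1/2)^k * (1/(k:ℚ))) * (1 - ch)^k)
      = -sh * (if k = 0 then 0 else u (k-1) - u k) := by
    intro k
    match k with
    | 0 => simp
    | (k+1) =>
      rw [dC, Derivation.leibniz_pow, dch, if_neg (Nat.succ_ne_zero k)]
      simp only [Nat.add_sub_cancel, smul_eq_mul, nsmul_eq_mul]
      have hk : (C (R := ℚ)) ((1/2)^(k+1) * (1/((k:ℚ)+1))) * (((k:ℚ⟦X⟧)+1)) = (C (R := ℚ)) ((1/2)^(k+1)) := by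
        have : ((k:ℚ⟦X⟧)+1) = (C (R := ℚ)) ((k:ℚ)+1) := by
          rw [map_add, map_one, map_natCast]
        rw [this, ← map_mul]
        congr 1
        have : ((k:ℚ)+1) ≠ 0 := by positivity
        field_simp
      have h2 : (C (R := ℚ)) ((1/2)^(k+1)) * (2 : ℚ⟦X⟧) = (C (R := ℚ)) ((1/2)^k) := by
        have : (2 : ℚ⟦X⟧) = (C (R := ℚ)) 2 := by
          rw [map_ofNat]
        rw [this, ← map_mul]
        congr 1
        ring
      rw [u, u]
      push_cast
      calc (1 + ch) * ((C (R := ℚ)) ((1/2)^(k+1) * (1/((k:ℚ)+1))) * (((k:ℚ⟦X⟧)+1) * ((1-ch)^k * -sh)))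
          = ((C (R := ℚ)) ((1/2)^(k+1) * (1/((k:ℚ)+1))) * ((k:ℚ⟦X⟧)+1)) * ((1 + ch) * ((1-ch)^k * -sh)) := by ring
        _ = -sh * ((C (R := ℚ)) ((1/2)^(k+1)) * (2:ℚ⟦X⟧) * (1-ch)^k - (C (R := ℚ)) ((1/2)^(k+1)) * (1-ch)^(k+1)) := by
            rw [hk]; ring
        _ = -sh * ((C (R := ℚ)) ((1/2)^k) * (1 - ch)^k - (C (R := ℚ)) ((1/2)^(k+1)) * (1-ch)^(k+1)) := by rw [h2]
  rw [P, map_sum, mul_sum]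
  calc ∑ k ∈ range (K+1), (1 + ch) * d⁄dX ℚ ((C (R := ℚ)) ((1/2)^k * (1/(k:ℚ))) * (1 - ch)^k)
      = ∑ k ∈ range (K+1), -sh * (if k = 0 then 0 else u (k-1) - u k) := by
        exact Finset.sum_congr rfl (fun k _ => hterm k)
    _ = -sh * ∑ k ∈ range (K+1), (if k = 0 then 0 else u (k-1) - u k) := by rw [mul_sum]
    _ = -sh * (1 - u K) := by
        rw [Finset.sum_range_succ']
        simp only [if_neg (Nat.succ_ne_zero _), Nat.add_sub_cancel, if_pos rfl, add_zero]
        rw [Finset.sum_range_sub' u K]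
        have : u 0 = 1 := by simp [u]
        rw [this]
        simp

noncomputable def B : ℚ⟦X⟧ := bernoulliPowerSeries ℚ
noncomputable def B₂ : ℚ⟦X⟧ := rescale (2:ℚ) B

lemma hEE' : E * E' = 1 := by
  have h := exp_mul_exp_eq_exp_add (1 : ℚ) (-1)
  simpa [E, E', rescale_one] using h

lemma hB : B * (E - 1) = X := bernoulliPowerSeries_mul_exp_sub_one ℚ

lemma hB2 : B₂ * (E * E - 1) = 2 * X := by
  have h := congrArg (rescale (2:ℚ)) (bernoulliPowerSeries_mul_exp_sub_one ℚ)
  rw [map_mul, map_sub, map_one, rescale_X] at h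
  have h2 : rescale (2:ℚ) (exp ℚ) = E * E := by
    have h3 := exp_pow_eq_rescale_exp (A := ℚ) 2
    rw [pow_two] at h3
    norm_num at h3
    rw [← h3, E]
  rw [h2] at h
  rw [B₂, B, h]
  rw [map_ofNat]

lemma hC : 2 * (C (R := ℚ)) (1/2) = 1 := by
  have : (2 : ℚ⟦X⟧) = (C (R := ℚ)) 2 := by rw [map_ofNat]
  rw [this, ← map_mul]
  norm_num

lemma R5 : sh * (E + 1) = (1 + ch) * (E - 1) := by
  rw [sh, ch]
  linear_combination (E - E'*E) * hC - hEE'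

lemma main (K : ℕ) :
    (X * d⁄dX ℚ (P K) + X - 2*B + 2*B₂) * ((1 + ch) * (E*E - 1))
      = X * sh * u K * (E*E - 1) := by
  linear_combination (X*(E*E-1)) * (key K) + (-2*(E+1)*(1+ch)) * hB
    + (2*(1+ch)) * hB2 + (-(X*(E-1))) * R5

lemma hX2 : (X : ℚ⟦X⟧)^2 ∣ (1 - ch) := by
  rw [X_pow_dvd_iff]
  intro m hm
  interval_cases m <;>
    simp [ch, coeff_E, coeff_E', map_sub, map_add, map_mul, coeff_C] <;> norm_num
    [PowerSeries.coeff_one, coeff_C]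

lemma ccE : constantCoeff (R := ℚ) E = 1 := by
  have := coeff_E 0; simpa using this

lemma ccE' : constantCoeff (R := ℚ) E' = 1 := by
  have := coeff_E' 0; simpa using this

lemma hE2resc : E * E = rescale (2:ℚ) (exp ℚ) := by
  have h3 := exp_pow_eq_rescale_exp (A := ℚ) 2
  rw [pow_two] at h3
  norm_num at h3
  rw [← h3, E]

lemma hXsh : (X : ℚ⟦X⟧) ∣ sh := by
  rw [← pow_one (X : ℚ⟦X⟧), X_pow_dvd_iff]
  intro m hm
  interval_cases m
  simp [sh, ccE, ccE']

lemma hXE2 : (X : ℚ⟦X⟧) ∣ (E * E - 1) := by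
  rw [← pow_one (X : ℚ⟦X⟧), X_pow_dvd_iff]
  intro m hm
  interval_cases m
  simp [sh, ccE, ccE']

lemma coeffG_eq_zero (n : ℕ) (hn : 0 < n) :
    coeff (R := ℚ) (2*n) (X * d⁄dX ℚ (P (n+1)) + X - 2*B + 2*B₂) = 0 := by
  set K := n + 1 with hK
  set G := X * d⁄dX ℚ (P K) + X - 2*B + 2*B₂ with hG
  obtain ⟨W, hW⟩ := hXE2
  have hW0 : W ≠ 0 := by
    have hc : coeff (R := ℚ) 1 (E*E - 1) = 2 := by
      rw [hE2resc, map_sub, coeff_rescale, coeff_exp]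
      norm_num
    rw [hW, coeff_succ_X_mul 0] at hc
    intro h
    rw [h] at hc
    simp at hc
  have hcancel : G * (1 + ch) = sh * u K * X := by
    have h1 : X * (G * (1 + ch) * W) = X * (sh * u K * X * W) := by
      have := main K
      rw [hW] at this
      linear_combination this
    have h2 := mul_left_cancel₀ (X_ne_zero (R := ℚ)) h1
    have h3 : W * (G * (1 + ch)) = W * (sh * u K * X) := by linear_combination h2
    exact mul_left_cancel₀ hW0 h3
  have hdvd : (X : ℚ⟦X⟧)^(2*K+2) ∣ G * (1 + ch) := by
    obtain ⟨s₀, hs⟩ := hXsh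
    obtain ⟨t₀, ht⟩ := pow_dvd_pow_of_dvd hX2 K
    refine ⟨s₀ * ((C (R := ℚ)) ((1/2)^K) * t₀), ?_⟩
    rw [hcancel, hs, u]
    rw [← pow_mul] at ht
    rw [ht]
    ring
  have hunit : IsUnit (1 + ch : ℚ⟦X⟧) := by
    rw [PowerSeries.isUnit_iff_constantCoeff]
    have : constantCoeff (R := ℚ) (1 + ch) = 2 := by
      have h0 : constantCoeff (R := ℚ) E = 1 := by
        have := coeff_E 0
        simpa using this
      have h0' : constantCoeff (R := ℚ) E' = 1 := by
        have := coeff_E' 0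
        simpa using this
      simp [ch, h0, h0']
      norm_num
    rw [this]
    exact isUnit_iff_ne_zero.mpr two_ne_zero
  have hdvdG : (X : ℚ⟦X⟧)^(2*K+2) ∣ G := (hunit.dvd_mul_right).mp hdvd
  rw [X_pow_dvd_iff] at hdvdG
  exact hdvdG (2*n) (by omega)

lemma coeff_EE' (r j m : ℕ) :
    coeff (R := ℚ) m (E ^ r * E' ^ j) = ((r : ℚ) - j) ^ m / m.factorial := by
  have E_pow : E ^ r = rescale (r : ℚ) (exp ℚ) := exp_pow_eq_rescale_exp r
  have E'_pow : E' ^ j = rescale (-(j : ℚ)) (exp ℚ) := by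
    rw [E', ← map_pow, exp_pow_eq_rescale_exp, rescale_rescale]
    norm_num
  rw [E_pow, E'_pow, exp_mul_exp_eq_exp_add, coeff_rescale, coeff_exp]
  simp [sub_eq_add_neg]
  ring

lemma expand (N k : ℕ) :
    coeff (R := ℚ) N ((1 - ch)^k) = ∑ r ∈ range (k+1), ∑ j ∈ range (k - r + 1),
      ((-(1/2):ℚ))^r * ((-(1/2):ℚ))^j * (k.choose r : ℚ) * ((k-r).choose j : ℚ) *
        (((r:ℚ) - (j:ℚ))^N / N.factorial) := by
  have hsplit : (1 - ch) = ((C (R := ℚ)) (-(1/2)) * E) + (1 + (C (R := ℚ)) (-(1/2)) * E') := by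
    rw [ch, map_neg]
    ring
  rw [hsplit, add_pow, map_sum]
  refine Finset.sum_congr rfl fun r hr => ?_
  have hb : (1 + (C (R := ℚ)) (-(1/2)) * E')^(k - r)
      = ∑ j ∈ range (k - r + 1), (C (R := ℚ)) ((-(1/2))^j * ((k-r).choose j)) * E'^j := by
    rw [add_comm, add_pow]
    refine Finset.sum_congr rfl fun j hj => ?_
    rw [one_pow, mul_pow, ← map_pow, mul_one, ← map_natCast (C (R := ℚ)) ((k-r).choose j), map_mul]
    ring
  rw [hb, Finset.mul_sum, Finset.sum_mul, map_sum]
  refine Finset.sum_congr rfl fun j hj => ?_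
  have hterm : ((C (R := ℚ)) (-(1/2)) * E)^r * ((C (R := ℚ)) ((-(1/2))^j * ((k-r).choose j)) * E'^j)
        * ((k.choose r : ℕ) : ℚ⟦X⟧)
      = (C (R := ℚ)) ((-(1/2))^r * (-(1/2))^j * (k.choose r) * ((k-r).choose j)) * (E^r * E'^j) := by
    rw [mul_pow, ← map_pow, ← map_natCast (C (R := ℚ)) (k.choose r), map_mul, map_mul, map_mul, map_mul]
    ring
  rw [hterm, coeff_C_mul, coeff_EE']

lemma coeffB (m : ℕ) : coeff (R := ℚ) m B = bernoulli m / m.factorial := by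
  simp [B, bernoulliPowerSeries, coeff_mk]

lemma coeffB2 (m : ℕ) : coeff (R := ℚ) m B₂ = 2^m * (bernoulli m / m.factorial) := by
  rw [B₂, coeff_rescale, coeffB]

lemma coeffP_eq (n : ℕ) (hn : 0 < n) :
    coeff (R := ℚ) (2*n) (P (n+1)) =
      ∑ k ∈ Icc 1 n, ((1/2:ℚ)^k * (1/(k:ℚ))) * coeff (R := ℚ) (2*n) ((1 - ch)^k) := by
  rw [P, map_sum]
  simp_rw [coeff_C_mul]
  symm
  apply Finset.sum_subset
  · intro k hk
    rw [Finset.mem_Icc] at hk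
    rw [Finset.mem_range]
    omega
  · intro k hk hnk
    rw [Finset.mem_range] at hk
    rw [Finset.mem_Icc] at hnk
    rcases Nat.eq_zero_or_pos k with h0 | hpos
    · subst h0; simp
    · have hkn : n < k := by omega
      have hd := pow_dvd_pow_of_dvd hX2 k
      rw [← pow_mul, X_pow_dvd_iff] at hd
      rw [hd (2*n) (by omega), mul_zero]

lemma key_coeff (n : ℕ) (hn : 0 < n) :
    coeff (R := ℚ) (2*n) (P (n+1)) * (2*n : ℚ)
      = 2 * (bernoulli (2*n) / (2*n).factorial) * (1 - 2^(2*n)) := by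
  have hG := coeffG_eq_zero n hn
  simp only [map_add, map_sub] at hG
  have h2B : coeff (R := ℚ) (2*n) (2*B) = 2 * (bernoulli (2*n) / (2*n).factorial) := by
    have : (2:ℚ⟦X⟧) * B = (C (R := ℚ)) 2 * B := by rw [map_ofNat]
    rw [this, coeff_C_mul, coeffB]
  have h2B2 : coeff (R := ℚ) (2*n) (2*B₂)
      = 2 * (2^(2*n) * (bernoulli (2*n) / (2*n).factorial)) := by
    have : (2:ℚ⟦X⟧) * B₂ = (C (R := ℚ)) 2 * B₂ := by rw [map_ofNat]
    rw [this, coeff_C_mul, coeffB2]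
  have hXc : coeff (R := ℚ) (2*n) (X : ℚ⟦X⟧) = 0 := by
    rw [coeff_X, if_neg (by omega)]
  have hXD : coeff (R := ℚ) (2*n) (X * d⁄dX ℚ (P (n+1)))
      = coeff (R := ℚ) (2*n) (P (n+1)) * (2*n : ℚ) := by
    obtain ⟨m, rfl⟩ : ∃ m, n = m + 1 := ⟨n-1, by omega⟩
    have hidx : 2*(m+1) = (2*m+1)+1 := by ring
    rw [hidx, coeff_succ_X_mul, coeff_derivative]
    have h2 : 2*m+1+1 = 2*(m+1) := by ring
    rw [h2]
    push_cast
    ring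
  rw [hXD, hXc, h2B, h2B2] at hG
  linear_combination hG

end BernExpl

theorem bernoulli_explicit_formula (n : ℕ) (hn : 0 < n) :
    (bernoulli (2 * n) : ℚ) =
      ((n : ℚ) / (1 - 2 ^ (2 * n))) *
        ∑ k ∈ Finset.Icc 1 n, (1 / (2 ^ k * k) : ℚ) *
          ∑ r ∈ Finset.range (k + 1), ((-1) ^ r / 2 ^ r) * (Nat.choose k r : ℚ) *
            ∑ j ∈ Finset.range (k - r + 1), ((-1) ^ j / 2 ^ j) * (Nat.choose (k - r) j : ℚ) *
              ((r : ℚ) - j) ^ (2 * n) := by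
  have hf : ((2*n).factorial : ℚ) ≠ 0 := by exact_mod_cast (2*n).factorial_ne_zero
  have hsum : ∀ k : ℕ,
      (∑ r ∈ Finset.range (k + 1), ((-1) ^ r / 2 ^ r) * (Nat.choose k r : ℚ) *
        ∑ j ∈ Finset.range (k - r + 1), ((-1) ^ j / 2 ^ j) * (Nat.choose (k - r) j : ℚ) *
          ((r : ℚ) - j) ^ (2 * n))
      = ((2*n).factorial : ℚ) * PowerSeries.coeff (R := ℚ) (2*n) ((1 - BernExpl.ch)^k) := by
    intro k
    rw [BernExpl.expand, Finset.mul_sum]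
    refine Finset.sum_congr rfl fun r _ => ?_
    rw [Finset.mul_sum, Finset.mul_sum]
    refine Finset.sum_congr rfl fun j _ => ?_
    have hneg : ∀ i : ℕ, (-(1/2):ℚ)^i = (-1)^i/2^i := by
      intro i; rw [neg_pow, div_pow, one_pow, mul_one_div]
    rw [hneg, hneg]
    field_simp
  have hstat : (∑ k ∈ Finset.Icc 1 n, (1 / (2 ^ k * k) : ℚ) *
      ∑ r ∈ Finset.range (k + 1), ((-1) ^ r / 2 ^ r) * (Nat.choose k r : ℚ) *
        ∑ j ∈ Finset.range (k - r + 1), ((-1) ^ j / 2 ^ j) * (Nat.choose (k - r) j : ℚ) *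
          ((r : ℚ) - j) ^ (2 * n))
      = ((2*n).factorial : ℚ) * PowerSeries.coeff (R := ℚ) (2*n) (BernExpl.P (n+1)) := by
    rw [BernExpl.coeffP_eq n hn, Finset.mul_sum]
    refine Finset.sum_congr rfl fun k _ => ?_
    rw [hsum k]
    have hk2 : ((2:ℚ)^k) ≠ 0 := by positivity
    field_simp
    rw [one_div_pow]
    field_simp
  rw [hstat]
  have hk := BernExpl.key_coeff n hn
  have h1 : (1 - 2^(2*n) : ℚ) ≠ 0 := by
    have : (1:ℚ) < 2^(2*n) := by
      apply one_lt_pow₀ (by norm_num)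
      omega
    intro h
    rw [sub_eq_zero] at h
    exact absurd h.symm (ne_of_gt this)
  have hn0 : (n:ℚ) ≠ 0 := by positivity
  have hNN : ((2*n).factorial : ℚ) * ((2*n).factorial : ℚ)⁻¹ = 1 := mul_inv_cancel₀ hf
  rw [div_mul_eq_mul_div, eq_div_iff h1]
  linear_combination (-(((2*n).factorial : ℚ))/2) * hk
    + (-(bernoulli (2*n) * (1 - 2^(2*n)))) * hNN
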